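/- arXiv:2506.20552 — 2 statements merged into one kernel-verified Lean document; each statement's English description precedes it below -/
import Mathlib

section
/- Let λ be a Salem number, k ⊆ ℚ(λ+λ^{-1}) a subfield, f ∈ k[x] the minimal polynomial of λ over k, and σ : k → ℝ a real embedding different from the inclusion k ↪ ℝ. Then σ(f(1)·f(-1)) > 0. -/
open Polynomial

/-- A monic real polynomial with positive degree and no real roots is everywhere positive. -/
private lemma salemAux_pos_of_no_root (g : ℝ[X]) (hm : g.Monic) (hdeg : 0 < g.degree)
    (h0 : ∀ x : ℝ, g.eval x ≠ 0) (x : ℝ) : 0 < g.eval x := by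
  by_contra hx
  push_neg at hx
  have hx' : g.eval x < 0 := lt_of_le_of_ne hx (h0 x)
  have ht := g.tendsto_atTop_of_leadingCoeff_nonneg hdeg (by rw [hm.leadingCoeff]; norm_num)
  obtain ⟨y, hy1, hy2⟩ :=
    ((ht.eventually_ge_atTop 1).and (Filter.eventually_ge_atTop x)).exists
  have hcont : ContinuousOn (fun t : ℝ => g.eval t) (Set.Icc x y) :=
    (Polynomial.continuous g).continuousOn
  have hsub := intermediate_value_Icc hy2 hcont
  obtain ⟨z, _, hz⟩ := hsub ⟨hx'.le, le_trans zero_le_one hy1⟩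
  exact h0 z hz

/-- If `t` is a real root of `σ(minpoly k lam)` with `t + t⁻¹ = lam + lam⁻¹`, and
`k ⊆ ℚ(lam + lam⁻¹)`, then `σ` is the inclusion. -/
private lemma salemAux_key (lam t : ℝ) (k : IntermediateField ℚ ℝ)
    (hk : k ≤ IntermediateField.adjoin ℚ ({lam + lam⁻¹} : Set ℝ))
    (hint : IsIntegral k lam) (σ : k →+* ℝ)
    (ht : (minpoly k lam).eval₂ σ t = 0)
    (hsum : t + t⁻¹ = lam + lam⁻¹) : σ = algebraMap k ℝ := by
  set f := minpoly k lam with hf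
  haveI : Fact (Irreducible f) := ⟨minpoly.irreducible hint⟩
  have haev : f.eval₂ (algebraMap k ℝ) lam = 0 := by
    simpa [Polynomial.aeval_def] using minpoly.aeval k lam
  set φ : AdjoinRoot f →+* ℝ := AdjoinRoot.lift (algebraMap k ℝ) lam haev with hφ
  set τ : AdjoinRoot f →+* ℝ := AdjoinRoot.lift σ t ht with hτ
  set β : AdjoinRoot f := AdjoinRoot.root f + (AdjoinRoot.root f)⁻¹ with hβ
  have hφβ : φ β = lam + lam⁻¹ := by
    rw [hβ, map_add, map_inv₀, hφ, AdjoinRoot.lift_root]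
  have hτβ : τ β = lam + lam⁻¹ := by
    rw [hβ, map_add, map_inv₀, hτ, AdjoinRoot.lift_root, hsum]
  have heq : Set.EqOn ⇑τ ⇑φ ({β} : Set (AdjoinRoot f)) := by
    intro a ha
    rw [Set.mem_singleton_iff] at ha
    subst ha
    rw [hτβ, hφβ]
  have hclEq := RingHom.eqOn_field_closure heq
  -- every element of k, pushed into AdjoinRoot f, lies in the subfield generated by β
  have hmemcl : ∀ c : k, (AdjoinRoot.of f) c ∈ Subfield.closure ({β} : Set (AdjoinRoot f)) := by
    intro c
    have hφc : φ ((AdjoinRoot.of f) c) = algebraMap k ℝ c := AdjoinRoot.lift_of haev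
    -- c belongs to the subfield closure of {lam + lam⁻¹} in ℝ
    have hcmem : (algebraMap k ℝ c : ℝ) ∈ Subfield.closure ({lam + lam⁻¹} : Set ℝ) := by
      have h1 : (c : ℝ) ∈ IntermediateField.adjoin ℚ ({lam + lam⁻¹} : Set ℝ) := hk c.2
      have h3 : Subfield.closure (Set.range (algebraMap ℚ ℝ) ∪ ({lam + lam⁻¹} : Set ℝ)) ≤
          Subfield.closure ({lam + lam⁻¹} : Set ℝ) := by
        apply Subfield.closure_le.mpr
        rintro y (⟨q, rfl⟩ | hy)
        · rw [eq_ratCast (algebraMap ℚ ℝ) q]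
          exact SubfieldClass.ratCast_mem _ q
        · exact Subfield.subset_closure hy
      exact h3 h1
    have hmap : (algebraMap k ℝ c : ℝ) ∈
        (Subfield.closure ({β} : Set (AdjoinRoot f))).map φ := by
      rw [RingHom.map_field_closure, Set.image_singleton, hφβ]
      exact hcmem
    obtain ⟨a, ha, haeq⟩ := Subfield.mem_map.mp hmap
    have : a = (AdjoinRoot.of f) c := φ.injective (haeq.trans hφc.symm)
    rwa [← this]
  ext c
  have h1 : τ ((AdjoinRoot.of f) c) = φ ((AdjoinRoot.of f) c) := hclEq (hmemcl c)
  have h2 : τ ((AdjoinRoot.of f) c) = σ c := AdjoinRoot.lift_of ht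
  have h3 : φ ((AdjoinRoot.of f) c) = algebraMap k ℝ c := AdjoinRoot.lift_of haev
  rw [← h2, h1, h3]

/-- A Salem number: a real algebraic integer `lam > 1` such that `lam⁻¹` is a Galois
conjugate of `lam` and all Galois conjugates other than `lam` and `lam⁻¹` have absolute
value `1`. -/
def IsSalem (lam : ℝ) : Prop :=
  1 < lam ∧ IsIntegral ℤ lam ∧
    Polynomial.aeval ((lam : ℂ)⁻¹) (minpoly ℚ lam) = 0 ∧
    ∀ z : ℂ, Polynomial.aeval z (minpoly ℚ lam) = 0 → z ≠ (lam : ℂ) → z ≠ (lam : ℂ)⁻¹ →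
      ‖z‖ = 1

/-- Let `lam` be a Salem number, `k ⊆ ℚ(lam + lam⁻¹)` a subfield, `f` the minimal polynomial
of `lam` over `k`, and `σ : k → ℝ` a real embedding different from the inclusion. Then
`σ(f(1)·f(-1)) > 0`. -/
theorem salem_minpoly_eval_pos_at_nonidentity_embedding (lam : ℝ) (h : IsSalem lam)
    (k : IntermediateField ℚ ℝ)
    (hk : k ≤ IntermediateField.adjoin ℚ ({lam + lam⁻¹} : Set ℝ))
    (σ : k →+* ℝ) (hσ : σ ≠ algebraMap k ℝ) :
    0 < σ ((minpoly k lam).eval 1 * (minpoly k lam).eval (-1)) := by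
  obtain ⟨hlam1, hintZ, hinv, hcirc⟩ := h
  have hlam0 : (0 : ℝ) < lam := lt_trans zero_lt_one hlam1
  have hintQ : IsIntegral ℚ lam := hintZ.tower_top
  have hintk : IsIntegral k lam := hintQ.tower_top
  set f := minpoly k lam with hf
  set g : ℝ[X] := f.map σ with hg
  set M := minpoly ℚ lam with hM
  have hcomp : σ.comp (algebraMap ℚ k) = algebraMap ℚ ℝ := Subsingleton.elim _ _
  have hdvd1 : f ∣ M.map (algebraMap ℚ k) := minpoly.dvd_map_of_isScalarTower ℚ k lam
  have hdvd : g ∣ M.map (algebraMap ℚ ℝ) := by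
    rw [hg, ← hcomp, ← Polynomial.map_map]
    exact Polynomial.map_dvd σ hdvd1
  have hfm : f.Monic := minpoly.monic hintk
  have hgm : g.Monic := hfm.map σ
  have hgdeg : 0 < g.degree := by
    rw [hg, Polynomial.degree_map_eq_of_injective σ.injective]
    exact minpoly.degree_pos hintk
  -- g has no real roots
  have hnoroot : ∀ x : ℝ, g.eval x ≠ 0 := by
    intro x hx
    have hMx : (M.map (algebraMap ℚ ℝ)).eval x = 0 := by
      obtain ⟨q, hq⟩ := hdvd
      rw [hq, Polynomial.eval_mul, hx, zero_mul]
    have hMC : Polynomial.aeval ((x : ℂ)) M = 0 := by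
      have h4 : (algebraMap ℝ ℂ) ((M.map (algebraMap ℚ ℝ)).eval x) = 0 := by
        rw [hMx, map_zero]
      rw [Polynomial.eval_map, Polynomial.hom_eval₂] at h4
      have hcomp2 : (algebraMap ℝ ℂ).comp (algebraMap ℚ ℝ) = algebraMap ℚ ℂ :=
        Subsingleton.elim _ _
      rw [hcomp2] at h4
      rw [Polynomial.aeval_def]
      exact h4
    by_cases hx1 : (x : ℂ) = (lam : ℂ)
    · have hxl : x = lam := by exact_mod_cast hx1
      subst hxl
      have hroot : f.eval₂ σ x = 0 := by rwa [hg, Polynomial.eval_map] at hx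
      exact hσ (salemAux_key x x k hk hintk σ hroot rfl)
    · by_cases hx2 : (x : ℂ) = (lam : ℂ)⁻¹
      · have hxl : x = lam⁻¹ := by
          rw [← Complex.ofReal_inv] at hx2
          exact_mod_cast hx2
        subst hxl
        have hroot : f.eval₂ σ lam⁻¹ = 0 := by rwa [hg, Polynomial.eval_map] at hx
        have hsum : lam⁻¹ + (lam⁻¹)⁻¹ = lam + lam⁻¹ := by
          rw [inv_inv, add_comm]
        exact hσ (salemAux_key lam lam⁻¹ k hk hintk σ hroot hsum)
      · -- |x| = 1, so x = ±1, which forces `M` to be linear: contradiction with lam > 1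
        have habs := hcirc (x : ℂ) hMC hx1 hx2
        rw [Complex.norm_real, Real.norm_eq_abs] at habs
        have hxpm : x = 1 ∨ x = -1 := (abs_eq zero_le_one).mp habs
        obtain ⟨c, hcx, hc1⟩ : ∃ c : ℚ, ((c : ℝ) = x ∧ ((c : ℝ) = 1 ∨ (c : ℝ) = -1)) := by
          rcases hxpm with rfl | rfl
          · exact ⟨1, by norm_num, Or.inl (by norm_num)⟩
          · exact ⟨-1, by norm_num, Or.inr (by norm_num)⟩
        have hMq : M.eval c = 0 := by
          apply (algebraMap ℚ ℝ).injective
          rw [map_zero, ← Polynomial.eval₂_hom (algebraMap ℚ ℝ) c]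
          rw [eq_ratCast (algebraMap ℚ ℝ) c, hcx, ← Polynomial.eval_map]
          exact hMx
        have hMirr : Irreducible M := minpoly.irreducible hintQ
        obtain ⟨u, hu⟩ := Polynomial.dvd_iff_isRoot.mpr hMq
        rcases hMirr.isUnit_or_isUnit hu with hunit | hunit
        · exact Polynomial.not_isUnit_X_sub_C c hunit
        · have haevM : Polynomial.aeval lam M = 0 := minpoly.aeval ℚ lam
          rw [hu, map_mul] at haevM
          have h5 : Polynomial.aeval lam (X - C c) = lam - (c : ℝ) := by
            simp [Polynomial.aeval_def]
          obtain ⟨d, hd0, hdu⟩ := Polynomial.isUnit_iff.mp hunit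
          have h6 : Polynomial.aeval lam u ≠ 0 := by
            rw [← hdu]
            simp only [Polynomial.aeval_C]
            rw [eq_ratCast (algebraMap ℚ ℝ) d]
            exact_mod_cast hd0.ne_zero
          have h7 : lam - (c : ℝ) = 0 := by
            rcases mul_eq_zero.mp haevM with h' | h'
            · rwa [h5] at h'
            · exact absurd h' h6
          rcases hc1 with hc | hc <;> rw [hc] at h7 <;> linarith
  have hpos := salemAux_pos_of_no_root g hgm hgdeg hnoroot
  have he1 : σ (f.eval 1) = g.eval 1 := by
    rw [hg, Polynomial.eval_map, ← map_one σ, Polynomial.eval₂_hom]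
  have he2 : σ (f.eval (-1)) = g.eval (-1) := by
    have : σ (-1) = -1 := by rw [map_neg, map_one]
    rw [hg, Polynomial.eval_map, ← this, Polynomial.eval₂_hom]
  rw [map_mul, he1, he2]
  exact mul_pos (hpos 1) (hpos (-1))
end

section
/- Let T be an isometry of a quadratic space (k^r, q) over a number field k (i.e., T ∈ O(q)_k) whose characteristic polynomial has coefficients in the ring of integers O_k. Then there exists a quadratic form q' over k that is k-equivalent to q and a matrix g ∈ GL(r,k) such that g^{-1}Tg lies in O(q')_{O_k}, the group of O_k-integral isometries of q'. -/
open Matrix NumberField Polynomial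

lemma coeff_integral_of_monic_dvd {k : Type*} [Field k] {c q : k[X]}
    (hc : c.Monic) (hq : q.Monic) (hd : q ∣ c)
    (hint : ∀ i, IsIntegral ℤ (c.coeff i)) : ∀ i, IsIntegral ℤ (q.coeff i) := by
  set R := integralClosure ℤ k with hR
  have hinj : Function.Injective (algebraMap ↥R k) := Subtype.coe_injective
  have hAI : Algebra.IsIntegral ℤ ↥R :=
    ⟨fun x => (isIntegral_algebraMap_iff hinj).mp ((mem_integralClosure_iff ℤ k).mp x.2)⟩
  have hcl : c ∈ lifts (algebraMap ↥R k) := by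
    rw [lifts_iff_coeff_lifts]
    intro n
    exact ⟨⟨c.coeff n, hint n⟩, rfl⟩
  obtain ⟨f, hf1, _, hf3⟩ := lifts_and_degree_eq_and_monic hcl hc
  have hmem := integralClosure.mem_lifts_of_monic_of_dvd_map k hf3 hq (by rwa [hf1])
  rw [lifts_iff_coeff_lifts] at hmem
  intro i
  obtain ⟨x, hx⟩ := hmem i
  rw [← hx]
  exact isIntegral_trans (R := ℤ) (A := ↥R) _ ((mem_integralClosure_iff ↥R k).mp x.2)


noncomputable def quotBasis {k : Type*} [Field k] {q : k[X]} (hq : q.Monic) :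
    Module.Basis (Fin q.natDegree) k (k[X] ⧸ (k[X] ∙ q)) :=
  AdjoinRoot.powerBasisAux' hq

lemma quotBasis_eq {k : Type*} [Field k] {q : k[X]} (hq : q.Monic) (m : Fin q.natDegree) :
    quotBasis hq m = Submodule.Quotient.mk (X ^ (m : ℕ)) := by
  show AdjoinRoot.powerBasisAux' hq m = _
  have h1 : AdjoinRoot.powerBasisAux' hq m = (AdjoinRoot.powerBasis' hq).basis m := rfl
  rw [h1, (AdjoinRoot.powerBasis' hq).basis_eq_pow m, AdjoinRoot.powerBasis'_gen,
    show AdjoinRoot.root q = AdjoinRoot.mk q X from rfl, ← map_pow]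
  rfl

lemma comp_integral {k : Type*} [Field k] {q : k[X]} (hq : q.Monic)
    (hint : ∀ i, IsIntegral ℤ (q.coeff i)) (m l : Fin q.natDegree) :
    IsIntegral ℤ ((quotBasis hq).repr ((X : k[X]) • quotBasis hq m) l) := by
  have hsmul : (X : k[X]) • quotBasis hq m
      = Submodule.Quotient.mk (X ^ ((m : ℕ) + 1)) := by
    rw [quotBasis_eq, ← Submodule.Quotient.mk_smul, pow_succ']
    rfl
  have hrepr : ∀ v : k[X], (quotBasis hq).repr (Submodule.Quotient.mk v) l
      = (v %ₘ q).coeff l := by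
    intro v
    show (AdjoinRoot.powerBasisAux' hq).repr (AdjoinRoot.mk q v) l = _
    rw [AdjoinRoot.powerBasisAux'_repr_apply_to_fun, AdjoinRoot.modByMonicHom_mk]
  rw [hsmul, hrepr]
  rcases lt_or_eq_of_le (Nat.succ_le_of_lt m.2) with hlt | heq
  · rw [(modByMonic_eq_self_iff hq).mpr ?deg, coeff_X_pow]
    · split_ifs
      · exact isIntegral_one
      · exact isIntegral_zero
    case deg =>
      rw [degree_X_pow, degree_eq_natDegree hq.ne_zero]
      exact_mod_cast hlt
  · have h0 : q %ₘ q = 0 := by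
      have := mul_self_modByMonic (p := (1 : k[X])) hq
      rwa [one_mul] at this
    have hq0 : q ≠ 0 := hq.ne_zero
    have hX : (X : k[X]) ^ ((m : ℕ) + 1) %ₘ q = X ^ ((m : ℕ) + 1) - q := by
      have hdeq : ((X : k[X]) ^ ((m : ℕ) + 1)).degree = q.degree := by
        rw [degree_X_pow, degree_eq_natDegree hq.ne_zero]
        exact_mod_cast heq
      have hsub : (X ^ ((m : ℕ) + 1) - q) %ₘ q = X ^ ((m : ℕ) + 1) - q := by
        rw [modByMonic_eq_self_iff hq, ← hdeq]
        refine degree_sub_lt hdeq (pow_ne_zero _ X_ne_zero) ?_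
        rw [leadingCoeff_X_pow]
        exact hq.leadingCoeff.symm
      calc (X : k[X]) ^ ((m : ℕ) + 1) %ₘ q = (q + (X ^ ((m : ℕ) + 1) - q)) %ₘ q := by ring_nf
        _ = q %ₘ q + (X ^ ((m : ℕ) + 1) - q) %ₘ q := add_modByMonic _ _
        _ = X ^ ((m : ℕ) + 1) - q := by rw [h0, hsub, zero_add]
    rw [hX, coeff_sub, coeff_X_pow]
    have hl : IsIntegral ℤ (q.coeff l) := hint l
    split_ifs
    · exact isIntegral_one.sub hl
    · exact isIntegral_zero.sub hl

lemma exists_basis_toMatrix_integral {r : ℕ} {k : Type*} [Field k]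
    (T : Matrix (Fin r) (Fin r) k) (hcoeff : ∀ i, IsIntegral ℤ (T.charpoly.coeff i)) :
    ∃ b : Module.Basis (Fin r) k (Fin r → k),
      ∀ i j, IsIntegral ℤ (LinearMap.toMatrix b b (Matrix.mulVecLin T) i j) := by
  classical
  set f : (Fin r → k) →ₗ[k] (Fin r → k) := Matrix.mulVecLin T with hf
  have hfeq : f = Matrix.toLinAlgEquiv' T := rfl
  have haeval : Polynomial.aeval f T.charpoly = 0 := by
    rw [hfeq, aeval_algEquiv]
    simp [Matrix.aeval_self_charpoly]
  have hsm : ∀ m : Module.AEval' f, T.charpoly • m = 0 := by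
    intro m
    apply (Module.AEval'.of f).symm.injective
    rw [Module.AEval.of_symm_smul, haeval]
    simp
  have htor : Module.IsTorsion k[X] (Module.AEval' f) := fun m =>
    ⟨⟨T.charpoly, mem_nonZeroDivisors_of_ne_zero (Matrix.charpoly_monic T).ne_zero⟩, hsm m⟩
  obtain ⟨ι, hι, p, hp, e, ⟨E⟩⟩ :=
    Module.equiv_directSum_of_isTorsion (M := Module.AEval' f) htor
  set q : ι → k[X] := fun i => (normalize (p i)) ^ (e i) with hqdef
  have hq : ∀ i, (q i).Monic := fun i => (monic_normalize (hp i).ne_zero).pow _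
  have hspan : ∀ i, (k[X] ∙ (p i ^ e i)) = (k[X] ∙ q i) := by
    intro i
    exact Ideal.span_singleton_eq_span_singleton.mpr ((associated_normalize (p i)).pow_pow)
  let E2 : Module.AEval' f ≃ₗ[k[X]] ∀ i, (k[X] ⧸ (k[X] ∙ q i)) :=
    E.trans ((DFinsupp.mapRange.linearEquiv fun i =>
        Submodule.quotEquivOfEq _ _ (hspan i)).trans
      (DirectSum.linearEquivFunOnFintype k[X] ι _))
  have hdvd : ∀ i, q i ∣ T.charpoly := by
    intro i
    have h1 := congrArg E2 (hsm (E2.symm (Pi.single i (Submodule.Quotient.mk 1))))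
    rw [_root_.map_smul, E2.apply_symm_apply, map_zero] at h1
    have h2 := congrFun h1 i
    rw [Pi.smul_apply, Pi.single_eq_same, Pi.zero_apply] at h2
    have h3 : Submodule.Quotient.mk (T.charpoly) = (0 : k[X] ⧸ (k[X] ∙ q i)) := by
      rw [← h2, ← Submodule.Quotient.mk_smul, smul_eq_mul, mul_one]
    rw [Submodule.Quotient.mk_eq_zero] at h3
    obtain ⟨a, ha⟩ := Submodule.mem_span_singleton.mp h3
    exact ⟨a, by rw [← ha, smul_eq_mul, mul_comm]⟩
  have hqint : ∀ i j, IsIntegral ℤ ((q i).coeff j) := fun i =>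
    coeff_integral_of_monic_dvd (Matrix.charpoly_monic T) (hq i) (hdvd i) hcoeff
  let s : ∀ i, Module.Basis (Fin (q i).natDegree) k (k[X] ⧸ (k[X] ∙ q i)) := fun i => quotBasis (hq i)
  let BB : Module.Basis (Σ i, Fin (q i).natDegree) k (∀ i, k[X] ⧸ (k[X] ∙ q i)) := Pi.basis s
  let G : (Fin r → k) ≃ₗ[k] (∀ i, k[X] ⧸ (k[X] ∙ q i)) :=
    (Module.AEval'.of f).trans (E2.restrictScalars k)
  have hcard : Fintype.card (Σ i, Fin (q i).natDegree) = r := by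
    have h1 := Module.finrank_eq_card_basis BB
    have h2 := LinearEquiv.finrank_eq G
    rw [Module.finrank_fin_fun] at h2
    omega
  let eqv : (Σ i, Fin (q i).natDegree) ≃ Fin r := Fintype.equivFinOfCardEq hcard
  refine ⟨(BB.map G.symm).reindex eqv, ?_⟩
  intro i j
  rw [LinearMap.toMatrix_apply, Module.Basis.repr_reindex_apply, Module.Basis.reindex_apply, Module.Basis.map_apply,
    Module.Basis.map_repr]
  have hGf : ∀ x, G (f x) = (X : k[X]) • G x := by
    intro x
    show E2 ((Module.AEval'.of f) (f x)) = X • E2 ((Module.AEval'.of f) x)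
    rw [← _root_.map_smul]
    congr 1
    exact (Module.AEval.X_smul_of f x).symm
  rw [LinearEquiv.trans_apply, LinearEquiv.symm_symm, hGf, G.apply_symm_apply]
  obtain ⟨t, m⟩ := eqv.symm j
  obtain ⟨s', l⟩ := eqv.symm i
  rw [Pi.basis_apply, ← Pi.single_smul, Pi.basis_repr]
  by_cases hst : s' = t
  · subst hst
    rw [Pi.single_eq_same]
    exact comp_integral (hq s') (hqint s') m l
  · rw [Pi.single_eq_of_ne hst, map_zero]
    exact isIntegral_zero


/-- Let `T` be an isometry of a quadratic space `(k^r, q)` over a number field `k` (given by an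
invertible symmetric matrix `S`), whose characteristic polynomial has coefficients in `𝓞 k`.
Then there are a `k`-equivalent form `S' = gᵀ S g` and `g ∈ GL(r,k)` such that `g⁻¹ T g` is an
isometry of `S'` with all entries in `𝓞 k`. -/
theorem isometry_conjugate_into_integral_points {r : ℕ} (k : Type*) [Field k] [NumberField k]
    (S : Matrix (Fin r) (Fin r) k) (hsymm : Sᵀ = S) (hS : IsUnit S)
    (T : Matrix (Fin r) (Fin r) k) (hT : Tᵀ * S * T = S)
    (hcoeff : ∀ i, IsIntegral ℤ (T.charpoly.coeff i)) :
    ∃ (g : GL (Fin r) k) (S' : Matrix (Fin r) (Fin r) k),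
      S' = (g : Matrix (Fin r) (Fin r) k)ᵀ * S * (g : Matrix (Fin r) (Fin r) k) ∧
      (((↑g⁻¹ : Matrix (Fin r) (Fin r) k) * T * (g : Matrix (Fin r) (Fin r) k))ᵀ * S'
          * ((↑g⁻¹ : Matrix (Fin r) (Fin r) k) * T * (g : Matrix (Fin r) (Fin r) k)) = S') ∧
      ∀ i j, IsIntegral ℤ
        (((↑g⁻¹ : Matrix (Fin r) (Fin r) k) * T * (g : Matrix (Fin r) (Fin r) k)) i j) := by
  obtain ⟨b, hb⟩ := exists_basis_toMatrix_integral T hcoeff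
  set e := Pi.basisFun k (Fin r) with he
  have hPi : e.toMatrix b * b.toMatrix e = 1 := Module.Basis.toMatrix_mul_toMatrix_flip e b
  have hiP : b.toMatrix e * e.toMatrix b = 1 := Module.Basis.toMatrix_mul_toMatrix_flip b e
  refine ⟨⟨e.toMatrix b, b.toMatrix e, hPi, hiP⟩, _, rfl, ?_, ?_⟩ <;>
  · set g : GL (Fin r) k := ⟨e.toMatrix b, b.toMatrix e, hPi, hiP⟩ with hg
    set gm := (g : Matrix (Fin r) (Fin r) k) with hgm
    set gi := (↑g⁻¹ : Matrix (Fin r) (Fin r) k) with hgi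
    have hgc : gm = e.toMatrix b := rfl
    have hgic : gi = b.toMatrix e := rfl
    have h1 : gm * gi = 1 := by rw [hgc, hgic]; exact hPi
    have h2 : ∀ X : Matrix (Fin r) (Fin r) k, gm * (gi * X) = X := fun X => by
      rw [← mul_assoc, h1, one_mul]
    have h3 : ∀ X : Matrix (Fin r) (Fin r) k, giᵀ * (gmᵀ * X) = X := fun X => by
      rw [← mul_assoc, ← Matrix.transpose_mul, h1, Matrix.transpose_one, one_mul]
    first
    | · -- isometry property
        conv_rhs => rw [← hT]
        simp only [Matrix.transpose_mul, mul_assoc, h2, h3]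
    | · -- integrality
        have key : gi * T * gm = LinearMap.toMatrix b b (Matrix.mulVecLin T) := by
          have h4 := basis_toMatrix_mul_linearMap_toMatrix_mul_basis_toMatrix
            b e b e (Matrix.mulVecLin T)
          have h5 : LinearMap.toMatrix e e (Matrix.mulVecLin T) = T := by
            rw [he, LinearMap.toMatrix_eq_toMatrix']
            exact LinearMap.toMatrix'_toLin' T
          rw [h5] at h4
          rw [hgic, hgc]
          exact h4
        rw [key]
        exact hb
end
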